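/- Let Φ : ℝⁿ → ℝ be a C³ convex function, let u be the unique global C² solution on [0,∞) × ℝⁿ of the multidimensional Burgers system ∂u/∂t + Σ_{j=1}^n u_j ∂u/∂x_j = 0 with u(0,x) = ∇Φ(x), and let U ∈ C³([0,∞) × ℝⁿ) be a potential with u_i = ∂U/∂x_i. Suppose moreover there exists δ > 0 such that Hess Φ(x) ≥ δ·I for all x ∈ ℝⁿ. Then for any fixed α ∈ ℝⁿ, along the characteristic curve x(t,α) = α + t∇Φ(α) one has |D²U(t, x(t,α))| ≤ C̃₁(1+t)^{-1} and |D³U(t, x(t,α))| ≤ C̃₂(1+t)^{-2} for all t ≥ 0, where C̃₁ and C̃₂ are constants independent of t but depending on δ and α. -/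

import Mathlib

/-- The gradient `∇Φ(x) = (∂Φ/∂x₁, …, ∂Φ/∂xₙ)(x)`. -/
noncomputable def gradFn {n : ℕ} (Φ : (Fin n → ℝ) → ℝ) (x : Fin n → ℝ) : Fin n → ℝ :=
  fun i => fderiv ℝ Φ x (Pi.single i 1)

/-- The Hessian matrix `Hess Φ(x) = (∂²Φ/∂xᵢ∂xⱼ)(x)`. -/
noncomputable def hessMat {n : ℕ} (Φ : (Fin n → ℝ) → ℝ) (x : Fin n → ℝ) :
    Matrix (Fin n) (Fin n) ℝ :=
  Matrix.of fun i j => iteratedFDeriv ℝ 2 Φ x ![Pi.single i 1, Pi.single j 1]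

/-- `u : ℝ → (Fin n → ℝ) → (Fin n → ℝ)` is a global `C^k` solution on `[0,∞) × ℝⁿ` of the
multidimensional Burgers system `∂u/∂t + ∑ⱼ uⱼ ∂u/∂xⱼ = 0` with initial data `φ`. -/
def IsGlobalSolBurgers (n : ℕ) (φ : (Fin n → ℝ) → (Fin n → ℝ)) (k : ℕ∞)
    (u : ℝ → (Fin n → ℝ) → (Fin n → ℝ)) : Prop :=
  ContDiffOn ℝ k (fun p : ℝ × (Fin n → ℝ) => u p.1 p.2) (Set.Ici 0 ×ˢ Set.univ) ∧
  (∀ x, u 0 x = φ x) ∧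
  ∀ t ∈ Set.Ici (0 : ℝ), ∀ x : Fin n → ℝ, ∀ i : Fin n,
    derivWithin (fun s => u s x i) (Set.Ici 0) t
      + ∑ j : Fin n, u t x j * fderiv ℝ (fun y => u t y i) x (Pi.single j 1) = 0

set_option linter.unusedSectionVars false

variable {E F : Type*} [NormedAddCommGroup E] [NormedSpace ℝ E]
  [NormedAddCommGroup F] [NormedSpace ℝ F]

lemma upd2_0 (a b x : E) : Function.update ![a,b] 0 x = ![x,b] := by
  funext i; fin_cases i <;> simp [Function.update]
lemma upd2_1 (a b x : E) : Function.update ![a,b] 1 x = ![a,x] := by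
  funext i; fin_cases i <;> simp [Function.update]
lemma upd3_2 (a b c x : E) : Function.update ![a,b,c] 2 x = ![a,b,x] := by
  funext i; fin_cases i <;> simp [Function.update]

noncomputable def slot2_0 (f : ContinuousMultilinearMap ℝ (fun _ : Fin 2 => E) F) (b : E) :
    E →ₗ[ℝ] F where
  toFun x := f ![x, b]
  map_add' x y := by
    have := f.map_update_add ![x,b] 0 x y
    rwa [upd2_0, upd2_0, upd2_0] at this
  map_smul' c x := by
    have := f.map_update_smul ![x,b] 0 c x
    rwa [upd2_0, upd2_0] at this

noncomputable def slot2_1 (f : ContinuousMultilinearMap ℝ (fun _ : Fin 2 => E) F) (a : E) :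
    E →ₗ[ℝ] F where
  toFun x := f ![a, x]
  map_add' x y := by
    have := f.map_update_add ![a,x] 1 x y
    rwa [upd2_1, upd2_1, upd2_1] at this
  map_smul' c x := by
    have := f.map_update_smul ![a,x] 1 c x
    rwa [upd2_1, upd2_1] at this

noncomputable def slot3_2 (f : ContinuousMultilinearMap ℝ (fun _ : Fin 3 => E) F) (a b : E) :
    E →ₗ[ℝ] F where
  toFun x := f ![a, b, x]
  map_add' x y := by
    have := f.map_update_add ![a,b,x] 2 x y
    rwa [upd3_2, upd3_2, upd3_2] at this
  map_smul' r x := by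
    have := f.map_update_smul ![a,b,x] 2 r x
    rwa [upd3_2, upd3_2] at this

lemma pi_single_expand {n : ℕ} (v : Fin n → ℝ) :
    v = ∑ j, v j • (Pi.single j 1 : Fin n → ℝ) := by
  have : ∀ j, v j • (Pi.single j 1 : Fin n → ℝ) = Pi.single j (v j) := by
    intro j; funext k; simp [Pi.single_apply, mul_ite]
  simp_rw [this, Finset.univ_sum_single]

lemma cml2_expand_fst {n : ℕ} (f : ContinuousMultilinearMap ℝ (fun _ : Fin 2 => (Fin n → ℝ)) F)
    (v w : Fin n → ℝ) :
    f ![v, w] = ∑ j, v j • f ![Pi.single j 1, w] := by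
  have h : f ![v, w] = slot2_0 f w v := rfl
  rw [h]
  conv_lhs => rw [pi_single_expand v]
  rw [map_sum]
  simp only [map_smul]
  rfl

lemma cml2_expand_snd {n : ℕ} (f : ContinuousMultilinearMap ℝ (fun _ : Fin 2 => (Fin n → ℝ)) F)
    (v w : Fin n → ℝ) :
    f ![v, w] = ∑ j, w j • f ![v, Pi.single j 1] := by
  have h : f ![v, w] = slot2_1 f v w := rfl
  rw [h]
  conv_lhs => rw [pi_single_expand w]
  rw [map_sum]
  simp only [map_smul]
  rfl

lemma cml3_expand_thd {n : ℕ} (f : ContinuousMultilinearMap ℝ (fun _ : Fin 3 => (Fin n → ℝ)) F)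
    (a b c : Fin n → ℝ) :
    f ![a, b, c] = ∑ j, c j • f ![a, b, Pi.single j 1] := by
  have h : f ![a, b, c] = slot3_2 f a b c := rfl
  rw [h]
  conv_lhs => rw [pi_single_expand c]
  rw [map_sum]
  simp only [map_smul]
  rfl

lemma pi_norm_le_sqrt_sum {n : ℕ} (v : Fin n → ℝ) : ‖v‖ ≤ Real.sqrt (∑ i, v i ^ 2) := by
  rw [pi_norm_le_iff_of_nonneg (Real.sqrt_nonneg _)]
  intro i
  rw [Real.norm_eq_abs, ← Real.sqrt_sq_eq_abs]
  exact Real.sqrt_le_sqrt (Finset.single_le_sum (f := fun i => v i ^ 2)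
    (fun j _ => sq_nonneg _) (Finset.mem_univ i))

lemma sum_sq_le_n {n : ℕ} (v : Fin n → ℝ) : ∑ i, v i ^ 2 ≤ n * ‖v‖ ^ 2 := by
  calc ∑ i, v i ^ 2 ≤ ∑ _i : Fin n, ‖v‖ ^ 2 := by
        refine Finset.sum_le_sum fun i _ => ?_
        have := norm_le_pi_norm v i
        have h0 : |v i| ≤ ‖v‖ := by rwa [Real.norm_eq_abs] at this
        calc v i ^ 2 = |v i| ^ 2 := (sq_abs _).symm
        _ ≤ ‖v‖ ^ 2 := by
              have : (0:ℝ) ≤ |v i| := abs_nonneg _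
              nlinarith
  _ = n * ‖v‖ ^ 2 := by simp [Finset.sum_const, nsmul_eq_mul]

lemma fin2_eta (m : Fin 2 → E) : m = ![m 0, m 1] := by
  funext i; fin_cases i <;> simp
lemma fin3_eta (m : Fin 3 → E) : m = ![m 0, m 1, m 2] := by
  funext i; fin_cases i <;> simp

lemma sup_bound_of_form {n : ℕ} {c : ℝ} (hc : 0 < c) (w x : Fin n → ℝ)
    (h : c * ∑ i, w i ^ 2 ≤ ∑ i, x i * w i) :
    ‖w‖ ≤ c⁻¹ * Real.sqrt n * ‖x‖ := by
  set S := ∑ i, w i ^ 2 with hS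
  have hS0 : 0 ≤ S := Finset.sum_nonneg fun i _ => sq_nonneg _
  rcases eq_or_lt_of_le hS0 with hSz | hSpos
  · -- S = 0 ⇒ w = 0
    have hw : w = 0 := by
      funext i
      have := (Finset.sum_eq_zero_iff_of_nonneg (fun i _ => sq_nonneg (w i))).mp hSz.symm
      have := this i (Finset.mem_univ i)
      exact pow_eq_zero_iff (n := 2) (by norm_num) |>.mp this
    rw [hw, norm_zero]
    positivity
  · -- c² S² ≤ (∑ x w)² ≤ (∑x²) S
    have hxw : (∑ i, x i * w i) ^ 2 ≤ (∑ i, x i ^ 2) * S :=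
      Finset.sum_mul_sq_le_sq_mul_sq _ _ _
    have h1 : (c * S) ^ 2 ≤ (∑ i, x i * w i) ^ 2 := by
      have h0 : 0 ≤ c * S := by positivity
      have := h
      nlinarith
    have h2 : c ^ 2 * S ≤ ∑ i, x i ^ 2 := by
      have := le_trans h1 hxw
      have hc2 : 0 < S := hSpos
      nlinarith
    have h3 : ∑ i, x i ^ 2 ≤ n * ‖x‖ ^ 2 := sum_sq_le_n x
    have h4 : ‖w‖ ^ 2 ≤ S := by
      have := pi_norm_le_sqrt_sum w
      have h5 : 0 ≤ ‖w‖ := norm_nonneg _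
      nlinarith [Real.sq_sqrt hS0, Real.sqrt_nonneg S]
    have h6 : ‖w‖ ^ 2 ≤ c⁻¹ ^ 2 * (n * ‖x‖ ^ 2) := by
      have hkey := mul_le_mul_of_nonneg_left (h2.trans h3) (sq_nonneg c⁻¹)
      have hid : c⁻¹ ^ 2 * (c ^ 2 * S) = S := by field_simp
      linarith
    have h7 : (0:ℝ) ≤ c⁻¹ * Real.sqrt n * ‖x‖ := by positivity
    have h8 : (c⁻¹ * Real.sqrt n * ‖x‖) ^ 2 = c⁻¹ ^ 2 * (n * ‖x‖ ^ 2) := by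
      have hsq : Real.sqrt n ^ 2 = (n:ℝ) := Real.sq_sqrt (by positivity)
      field_simp
      nlinarith [hsq]
    nlinarith [norm_nonneg w]

lemma decay_factor {δ t : ℝ} (hδ : 0 < δ) (ht : 0 ≤ t) :
    (1 + t * δ)⁻¹ ≤ max 1 δ⁻¹ * (1 + t)⁻¹ := by
  have h1 : 0 < 1 + t * δ := by positivity
  have h2 : 0 < 1 + t := by positivity
  have key : 1 + t ≤ max 1 δ⁻¹ * (1 + t * δ) := by
    have hm1 : (1:ℝ) ≤ max 1 δ⁻¹ := le_max_left _ _
    have hm2 : δ⁻¹ ≤ max 1 δ⁻¹ := le_max_right _ _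
    have hid : δ⁻¹ * δ = 1 := inv_mul_cancel₀ hδ.ne'
    nlinarith [mul_le_mul_of_nonneg_right hm2 (mul_nonneg ht hδ.le)]
  calc (1 + t * δ)⁻¹ = 1 / (1 + t * δ) := inv_eq_one_div _
    _ ≤ max 1 δ⁻¹ / (1 + t) := by
        rw [div_le_div_iff₀ h1 h2]; linarith
    _ = max 1 δ⁻¹ * (1 + t)⁻¹ := by rw [div_eq_mul_inv]

noncomputable def gradFn' {n : ℕ} (Φ : (Fin n → ℝ) → ℝ) (x : Fin n → ℝ) : Fin n → ℝ :=
  fun i => fderiv ℝ Φ x (Pi.single i 1)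

/-- The coordinate-projection CLM sending a functional `L` to `fun i => L (eᵢ)`. -/
noncomputable def Pclm (n : ℕ) : ((Fin n → ℝ) →L[ℝ] ℝ) →L[ℝ] (Fin n → ℝ) :=
  ContinuousLinearMap.pi (fun i => ContinuousLinearMap.apply ℝ ℝ (Pi.single i 1))

lemma gradFn'_eq_comp {n : ℕ} (Φ : (Fin n → ℝ) → ℝ) :
    gradFn' Φ = (Pclm n) ∘ (fderiv ℝ Φ) := rfl

lemma gradFn'_contDiff {n : ℕ} {Φ : (Fin n → ℝ) → ℝ} (hΦ : ContDiff ℝ 3 Φ) :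
    ContDiff ℝ 2 (gradFn' Φ) := by
  rw [gradFn'_eq_comp]
  exact (Pclm n).contDiff.comp (hΦ.fderiv_right (by norm_num))

lemma fderiv_gradFn'_apply {n : ℕ} {Φ : (Fin n → ℝ) → ℝ} (hΦ : ContDiff ℝ 3 Φ)
    (y v : Fin n → ℝ) (i : Fin n) :
    (fderiv ℝ (gradFn' Φ) y v) i = iteratedFDeriv ℝ 2 Φ y ![v, Pi.single i 1] := by
  have hd : DifferentiableAt ℝ (fderiv ℝ Φ) y :=
    ((hΦ.fderiv_right (m := 2) (by norm_num)).differentiable (by norm_num)).differentiableAt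
  have hcomp : HasFDerivAt (gradFn' Φ) ((Pclm n).comp (fderiv ℝ (fderiv ℝ Φ) y)) y := by
    rw [gradFn'_eq_comp]
    exact ((Pclm n).hasFDerivAt).comp y hd.hasFDerivAt
  rw [hcomp.fderiv]
  rw [iteratedFDeriv_two_apply]
  simp [Pclm, ContinuousLinearMap.apply]

/-- copy of the pinned definition (scratch only) -/
def IsGlobalSolBurgers' (n : ℕ) (φ : (Fin n → ℝ) → (Fin n → ℝ)) (k : ℕ∞)
    (u : ℝ → (Fin n → ℝ) → (Fin n → ℝ)) : Prop :=
  ContDiffOn ℝ k (fun p : ℝ × (Fin n → ℝ) => u p.1 p.2) (Set.Ici 0 ×ˢ Set.univ) ∧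
  (∀ x, u 0 x = φ x) ∧
  ∀ t ∈ Set.Ici (0 : ℝ), ∀ x : Fin n → ℝ, ∀ i : Fin n,
    derivWithin (fun s => u s x i) (Set.Ici 0) t
      + ∑ j : Fin n, u t x j * fderiv ℝ (fun y => u t y i) x (Pi.single j 1) = 0

lemma char_const {n : ℕ} {W : (Fin n → ℝ) → (Fin n → ℝ)}
    {u : ℝ → (Fin n → ℝ) → (Fin n → ℝ)} (hu : IsGlobalSolBurgers' n W 2 u) :
    ∀ t ∈ Set.Ici (0:ℝ), ∀ β, u t (β + t • W β) = W β := by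
  obtain ⟨hu2, hu0, hpde⟩ := hu
  set S : Set (ℝ × (Fin n → ℝ)) := Set.Ici 0 ×ˢ Set.univ with hSdef
  have hSu : UniqueDiffOn ℝ S := (uniqueDiffOn_Ici 0).prod uniqueDiffOn_univ
  set uu : ℝ × (Fin n → ℝ) → (Fin n → ℝ) := fun p => u p.1 p.2 with huu
  set F := fderivWithin ℝ uu S with hF
  have hFd : ∀ q ∈ S, HasFDerivWithinAt uu (F q) S q := fun q hq =>
    ((hu2.differentiableOn (by norm_num)) q hq).hasFDerivWithinAt
  have hFc : ContinuousOn F S := hu2.continuousOn_fderivWithin hSu (by norm_num)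
  have hmem : ∀ s : ℝ, 0 ≤ s → ∀ y : Fin n → ℝ, (s, y) ∈ S := fun s hs y => ⟨hs, trivial⟩
  -- spatial derivative identity
  have hspace : ∀ s, 0 ≤ s → ∀ (x : Fin n → ℝ) (i : Fin n) (w : Fin n → ℝ),
      fderiv ℝ (fun y => u s y i) x w = (F (s, x) (0, w)) i := by
    intro s hs x i w
    have hι : HasFDerivAt (fun y : Fin n → ℝ => (s, y))
        (ContinuousLinearMap.inr ℝ ℝ (Fin n → ℝ)) x := hasFDerivAt_prodMk_right s x
    have hcomp : HasFDerivWithinAt (fun y => uu (s, y))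
        ((F (s, x)).comp (ContinuousLinearMap.inr ℝ ℝ (Fin n → ℝ))) Set.univ x := by
      exact HasFDerivWithinAt.comp x (hFd (s,x) (hmem s hs x)) hι.hasFDerivWithinAt
        (fun y _ => hmem s hs y)
    have hcomp2 : HasFDerivAt (fun y => u s y i)
        ((ContinuousLinearMap.proj i).comp
          ((F (s, x)).comp (ContinuousLinearMap.inr ℝ ℝ (Fin n → ℝ)))) x := by
      have := (ContinuousLinearMap.proj (R := ℝ) (φ := fun _ : Fin n => ℝ) i).hasFDerivAt.comp x
        (hcomp.hasFDerivAt_of_univ)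
      exact this
    rw [hcomp2.fderiv]
    simp
  -- temporal derivative identity
  have htime : ∀ s, 0 ≤ s → ∀ (x : Fin n → ℝ) (i : Fin n),
      derivWithin (fun r => u r x i) (Set.Ici 0) s = (F (s, x) (1, 0)) i := by
    intro s hs x i
    have hσ : HasDerivWithinAt (fun r : ℝ => (r, x)) ((1:ℝ), (0 : Fin n → ℝ))
        (Set.Ici 0) s :=
      ((hasDerivAt_id s).prodMk (hasDerivAt_const s x)).hasDerivWithinAt
    have hcomp : HasDerivWithinAt (fun r => uu (r, x)) (F (s, x) (1, 0)) (Set.Ici 0) s :=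
      HasFDerivWithinAt.comp_hasDerivWithinAt (l := uu) (l' := F (s, x)) s (hFd (s,x) (hmem s hs x)) hσ
        (fun r hr => hmem r hr x)
    have hcomp2 : HasDerivWithinAt (fun r => u r x i) ((F (s, x) (1, 0)) i) (Set.Ici 0) s :=
      (ContinuousLinearMap.proj (R := ℝ) (φ := fun _ : Fin n => ℝ) i).hasFDerivAt.comp_hasDerivWithinAt s hcomp
    exact hcomp2.derivWithin (uniqueDiffOn_Ici 0 s hs)
  -- now fix β and run Gronwall on [0,T]
  intro t ht β
  set γ : ℝ → (Fin n → ℝ) := fun s => β + s • W β with hγ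
  set g : ℝ → (Fin n → ℝ) := fun s => uu (s, γ s) - W β with hg
  have hγd : ∀ s, HasDerivAt γ (W β) s := by
    intro s
    simpa [hγ] using ((hasDerivAt_id s).smul_const (W β)).const_add β
  have hgd : ∀ s, 0 ≤ s → HasDerivWithinAt g (F (s, γ s) (1, W β)) (Set.Ici 0) s := by
    intro s hs
    have hσ : HasDerivWithinAt (fun r : ℝ => (r, γ r)) ((1:ℝ), W β) (Set.Ici 0) s :=
      ((hasDerivAt_id s).prodMk (hγd s)).hasDerivWithinAt
    have : HasDerivWithinAt (fun r => uu (r, γ r)) (F (s, γ s) (1, W β)) (Set.Ici 0) s :=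
      HasFDerivWithinAt.comp_hasDerivWithinAt s (hFd _ (hmem s hs _)) hσ
        (fun r hr => hmem r hr _)
    simpa [hg] using this.sub_const (W β)
  -- derivative rewritten using the PDE
  have hkey : ∀ s, 0 ≤ s → ∀ i,
      (F (s, γ s) (1, W β)) i = -∑ j, g s j * (F (s, γ s) (0, Pi.single j 1)) i := by
    intro s hs i
    have hsplit : ((1:ℝ), W β) = ((1:ℝ), (0 : Fin n → ℝ)) + ((0:ℝ), W β) := by
      simp
    have hWexp : ((0:ℝ), W β) = ∑ j, (W β) j • ((0:ℝ), (Pi.single j 1 : Fin n → ℝ)) := by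
      simp only [Prod.smul_mk, smul_zero]
      rw [Prod.ext_iff]
      constructor
      · rw [Prod.fst_sum]; simp
      · rw [Prod.snd_sum]; simpa using pi_single_expand (W β)
    have e1 : (F (s, γ s) (1, W β)) i
        = (F (s, γ s) (1, 0)) i + ∑ j, (W β) j * (F (s, γ s) (0, Pi.single j 1)) i := by
      rw [hsplit, map_add, Pi.add_apply]
      congr 1
      rw [hWexp, map_sum, Finset.sum_apply]
      refine Finset.sum_congr rfl fun j _ => ?_
      rw [map_smul]
      simp
    have e2 := hpde s hs (γ s) i
    rw [htime s hs (γ s) i] at e2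
    have e3 : ∑ j, u s (γ s) j * fderiv ℝ (fun y => u s y i) (γ s) (Pi.single j 1)
        = ∑ j, u s (γ s) j * (F (s, γ s) (0, Pi.single j 1)) i := by
      refine Finset.sum_congr rfl fun j _ => ?_
      rw [hspace s hs (γ s) i (Pi.single j 1)]
    rw [e3] at e2
    have hgs : ∀ j, g s j = u s (γ s) j - (W β) j := by intro j; simp [hg, huu]
    have hsum : ∑ j, g s j * (F (s, γ s) (0, Pi.single j 1)) i
        = ∑ j, u s (γ s) j * (F (s, γ s) (0, Pi.single j 1)) i
          - ∑ j, (W β) j * (F (s, γ s) (0, Pi.single j 1)) i := by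
      rw [← Finset.sum_sub_distrib]
      exact Finset.sum_congr rfl fun j _ => by rw [hgs j]; ring
    rw [e1]
    linarith
  -- compactness bound on [0, t]
  have hγc : Continuous γ := continuous_const.add (continuous_id.smul continuous_const)
  have hhc : Continuous (fun s : ℝ => (s, γ s)) := continuous_id.prodMk hγc
  set K : Set (ℝ × (Fin n → ℝ)) := (fun s : ℝ => (s, γ s)) '' Set.Icc 0 t with hK
  have hKcomp : IsCompact K := isCompact_Icc.image hhc
  have hKS : K ⊆ S := by
    rintro q ⟨s, hs, rfl⟩
    exact hmem s hs.1 _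
  obtain ⟨C, hC⟩ := hKcomp.exists_bound_of_continuousOn (hFc.mono hKS)
  set C' : ℝ := max C 0 with hC'def
  have hC'b : ∀ s ∈ Set.Icc (0:ℝ) t, ‖F (s, γ s)‖ ≤ C' :=
    fun s hs => le_trans (hC _ ⟨s, hs, rfl⟩) (le_max_left _ _)
  have hC'0 : (0:ℝ) ≤ C' := le_max_right _ _
  -- continuity of g on [0, t]
  have hgc : ContinuousOn g (Set.Icc 0 t) := by
    have h1 : ContinuousOn uu S := hu2.continuousOn
    exact (h1.comp hhc.continuousOn (fun s hs => hmem s hs.1 _)).sub continuousOn_const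
  -- single vector norms
  have hsingle : ∀ j : Fin n, ‖(Pi.single j 1 : Fin n → ℝ)‖ ≤ 1 := by
    intro j
    rw [pi_norm_le_iff_of_nonneg zero_le_one]
    intro k
    rcases eq_or_ne j k with h | h <;> simp [Pi.single_apply, h]
  -- derivative norm bound
  have hbound : ∀ s ∈ Set.Ico (0:ℝ) t,
      ‖F (s, γ s) (1, W β)‖ ≤ (n * C') * ‖g s‖ + 0 := by
    intro s hs
    rw [add_zero]
    have hnn : (0:ℝ) ≤ (n * C') * ‖g s‖ := by positivity
    rw [pi_norm_le_iff_of_nonneg hnn]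
    intro i
    rw [hkey s hs.1 i]
    have hterm : ∀ j : Fin n, |g s j * (F (s, γ s) (0, Pi.single j 1)) i| ≤ ‖g s‖ * C' := by
      intro j
      rw [abs_mul]
      have h1 : |g s j| ≤ ‖g s‖ := by
        have := norm_le_pi_norm (g s) j
        rwa [Real.norm_eq_abs] at this
      have h2 : |(F (s, γ s) (0, Pi.single j 1)) i| ≤ C' := by
        have ha := norm_le_pi_norm (F (s, γ s) (0, Pi.single j 1)) i
        rw [Real.norm_eq_abs] at ha
        refine le_trans ha (le_trans ((F (s, γ s)).le_opNorm _) ?_)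
        have hbn : ‖((0:ℝ), (Pi.single j 1 : Fin n → ℝ))‖ ≤ 1 := by
          rw [Prod.norm_def]
          simp only [norm_zero]
          exact max_le zero_le_one (hsingle j)
        calc ‖F (s, γ s)‖ * ‖((0:ℝ), (Pi.single j 1 : Fin n → ℝ))‖
            ≤ C' * 1 := by
              refine mul_le_mul (hC'b s ⟨hs.1, hs.2.le⟩) hbn (norm_nonneg _) hC'0
        _ = C' := mul_one _
      exact mul_le_mul h1 h2 (abs_nonneg _) (norm_nonneg _)
    calc ‖(-∑ j, g s j * (F (s, γ s) (0, Pi.single j 1)) i : ℝ)‖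
        = |∑ j, g s j * (F (s, γ s) (0, Pi.single j 1)) i| := by
          rw [Real.norm_eq_abs, abs_neg]
    _ ≤ ∑ j, |g s j * (F (s, γ s) (0, Pi.single j 1)) i| :=
        Finset.abs_sum_le_sum_abs _ _
    _ ≤ ∑ _j : Fin n, ‖g s‖ * C' := Finset.sum_le_sum fun j _ => hterm j
    _ = n * (‖g s‖ * C') := by simp [Finset.sum_const, nsmul_eq_mul]
    _ = (n * C') * ‖g s‖ := by ring
  -- initial condition
  have hg0 : ‖g 0‖ ≤ 0 := by
    have : g 0 = 0 := by
      simp only [hg, huu, hγ]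
      simp [hu0 β]
    simp [this]
  -- Gronwall
  have hgron := norm_le_gronwallBound_of_norm_deriv_right_le hgc
    (fun s hs => (hgd s hs.1).mono (Set.Ici_subset_Ici.mpr hs.1)) hg0 hbound
  have hgt : ‖g t‖ ≤ 0 := by
    have := hgron t ⟨ht, le_refl t⟩
    rwa [gronwallBound_ε0, zero_mul] at this
  have : g t = 0 := by
    have := norm_le_zero_iff.mp hgt
    exact this
  have : uu (t, γ t) - W β = 0 := this
  have := sub_eq_zero.mp this
  exact this

noncomputable def hessMat' {n : ℕ} (Φ : (Fin n → ℝ) → ℝ) (x : Fin n → ℝ) :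
    Matrix (Fin n) (Fin n) ℝ :=
  Matrix.of fun i j => iteratedFDeriv ℝ 2 Φ x ![Pi.single i 1, Pi.single j 1]

lemma slice_contDiff {n : ℕ} {U : ℝ → (Fin n → ℝ) → ℝ}
    (hU : ContDiffOn ℝ 3 (fun p : ℝ × (Fin n → ℝ) => U p.1 p.2) (Set.Ici 0 ×ˢ Set.univ))
    {t : ℝ} (ht : 0 ≤ t) : ContDiff ℝ 3 (U t) := by
  have hmap : Set.univ ⊆ (fun x : Fin n → ℝ => (t, x)) ⁻¹' (Set.Ici 0 ×ˢ Set.univ) :=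
    fun x _ => ⟨ht, trivial⟩
  have := hU.comp ((contDiff_const.prodMk contDiff_id).contDiffOn) hmap
  rw [contDiffOn_univ] at this
  exact this

lemma fderiv_gradFn'_sum {n : ℕ} {Φ : (Fin n → ℝ) → ℝ} (hΦ : ContDiff ℝ 3 Φ)
    (β v : Fin n → ℝ) (i : Fin n) :
    (fderiv ℝ (gradFn' Φ) β v) i = ∑ j, v j * hessMat' Φ β j i := by
  rw [fderiv_gradFn'_apply hΦ]
  rw [cml2_expand_fst]
  rfl

lemma quad_bound {n : ℕ} {Φ : (Fin n → ℝ) → ℝ} (hΦ : ContDiff ℝ 3 Φ)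
    {δ : ℝ}
    (hstrict : ∀ x : Fin n → ℝ, ∀ v : Fin n → ℝ,
      δ * ∑ i, v i ^ 2 ≤ ∑ i, ∑ j, hessMat' Φ x i j * v i * v j)
    {t : ℝ} (ht : 0 ≤ t) (β v : Fin n → ℝ) :
    (1 + t * δ) * ∑ i, v i ^ 2 ≤ ∑ i, (v + t • fderiv ℝ (gradFn' Φ) β v) i * v i := by
  have hsum : ∑ i, (v + t • fderiv ℝ (gradFn' Φ) β v) i * v i
      = ∑ i, v i ^ 2 + t * ∑ i, (fderiv ℝ (gradFn' Φ) β v) i * v i := by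
    rw [Finset.mul_sum, ← Finset.sum_add_distrib]
    refine Finset.sum_congr rfl fun i _ => ?_
    simp only [Pi.add_apply, Pi.smul_apply, smul_eq_mul]
    ring
  have hquad : ∑ i, (fderiv ℝ (gradFn' Φ) β v) i * v i
      = ∑ i, ∑ j, hessMat' Φ β i j * v i * v j := by
    have h1 : ∀ i, (fderiv ℝ (gradFn' Φ) β v) i * v i = ∑ j, hessMat' Φ β j i * v j * v i := by
      intro i
      rw [fderiv_gradFn'_sum hΦ, Finset.sum_mul]
      exact Finset.sum_congr rfl fun j _ => by ring
    simp_rw [h1]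
    rw [Finset.sum_comm]
  have := hstrict β v
  rw [hsum, hquad]
  have hts : t * (δ * ∑ i, v i ^ 2) ≤ t * ∑ i, ∑ j, hessMat' Φ β i j * v i * v j :=
    mul_le_mul_of_nonneg_left (hstrict β v) ht
  nlinarith [hts]

lemma Ainv_bound {n : ℕ} {Φ : (Fin n → ℝ) → ℝ} (hΦ : ContDiff ℝ 3 Φ)
    {δ : ℝ} (hδ : 0 < δ)
    (hstrict : ∀ x : Fin n → ℝ, ∀ v : Fin n → ℝ,
      δ * ∑ i, v i ^ 2 ≤ ∑ i, ∑ j, hessMat' Φ x i j * v i * v j)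
    {t : ℝ} (ht : 0 ≤ t) (β a : Fin n → ℝ) :
    ∃ v : Fin n → ℝ, v + t • fderiv ℝ (gradFn' Φ) β v = a ∧
      ‖v‖ ≤ (1 + t * δ)⁻¹ * Real.sqrt n * ‖a‖ := by
  have hpos : (0:ℝ) < 1 + t * δ := by positivity
  set L : (Fin n → ℝ) →ₗ[ℝ] (Fin n → ℝ) :=
    LinearMap.id + t • (fderiv ℝ (gradFn' Φ) β).toLinearMap with hL
  have hLapp : ∀ w, L w = w + t • fderiv ℝ (gradFn' Φ) β w := fun w => rfl
  have hinj : Function.Injective L := by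
    rw [← LinearMap.ker_eq_bot]
    rw [LinearMap.ker_eq_bot']
    intro w hw
    have h1 := quad_bound hΦ hstrict ht β w
    rw [← hLapp, hw] at h1
    simp only [Pi.zero_apply, zero_mul, Finset.sum_const_zero] at h1
    have h2 : ∑ i, w i ^ 2 ≤ 0 := by
      by_contra hcon
      push_neg at hcon
      nlinarith
    funext i
    have h3 : ∀ i, w i ^ 2 = 0 := by
      intro i
      have := Finset.sum_eq_zero_iff_of_nonneg (fun i _ => sq_nonneg (w i)) |>.mp
        (le_antisymm h2 (Finset.sum_nonneg fun i _ => sq_nonneg _)) i (Finset.mem_univ i)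
      exact this
    have := h3 i
    exact pow_eq_zero_iff (n := 2) (by norm_num) |>.mp this
  have hsurj : Function.Surjective L := (LinearMap.injective_iff_surjective).mp hinj
  obtain ⟨v, hv⟩ := hsurj a
  refine ⟨v, by rw [← hLapp, hv], ?_⟩
  have hq := quad_bound hΦ hstrict ht β v
  have : ∑ i, (L v) i * v i = ∑ i, a i * v i := by rw [hv]
  rw [hLapp] at this
  rw [this] at hq
  exact sup_bound_of_form hpos v a hq

lemma ident_I1 {n : ℕ} {Φ : (Fin n → ℝ) → ℝ} (hΦ : ContDiff ℝ 3 Φ)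
    {U : ℝ → (Fin n → ℝ) → ℝ} {t : ℝ} (ht : 0 ≤ t)
    (hUt : ContDiff ℝ 3 (U t))
    (hfun : ∀ (β : Fin n → ℝ) (i : Fin n),
      fderiv ℝ (U t) (β + t • gradFn' Φ β) (Pi.single i 1) = gradFn' Φ β i) :
    ∀ (β v : Fin n → ℝ) (i : Fin n),
      iteratedFDeriv ℝ 2 (U t) (β + t • gradFn' Φ β)
          ![v + t • fderiv ℝ (gradFn' Φ) β v, Pi.single i 1]
        = iteratedFDeriv ℝ 2 Φ β ![v, Pi.single i 1] := by
  intro β v i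
  set W := gradFn' Φ with hWdef
  have hW2 : ContDiff ℝ 2 W := gradFn'_contDiff hΦ
  have hWd : Differentiable ℝ W := hW2.differentiable (by norm_num)
  set χ : (Fin n → ℝ) → (Fin n → ℝ) := fun β => β + t • W β with hχdef
  have hχ : HasFDerivAt χ
      (ContinuousLinearMap.id ℝ (Fin n → ℝ) + t • fderiv ℝ W β) β :=
    (hasFDerivAt_id β).add (((hWd β).hasFDerivAt).const_smul t)
  have hD1d : Differentiable ℝ (fderiv ℝ (U t)) :=
    (hUt.fderiv_right (m := 2) (by norm_num)).differentiable (by norm_num)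
  -- LHS derivative
  have hLHS : HasFDerivAt (fun b => fderiv ℝ (U t) (χ b) (Pi.single i 1))
      ((ContinuousLinearMap.apply ℝ ℝ (Pi.single i 1)).comp
        ((fderiv ℝ (fderiv ℝ (U t)) (χ β)).comp
          (ContinuousLinearMap.id ℝ (Fin n → ℝ) + t • fderiv ℝ W β))) β := by
    have h := (ContinuousLinearMap.apply ℝ ℝ (Pi.single i 1)).hasFDerivAt.comp β
      (((hD1d (χ β)).hasFDerivAt).comp β hχ)
    exact h
  -- RHS derivative
  have hRHS : HasFDerivAt (fun b => W b i)
      ((ContinuousLinearMap.proj (R := ℝ) (φ := fun _ : Fin n => ℝ) i).comp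
        (fderiv ℝ W β)) β := by
    have h := (ContinuousLinearMap.proj (R := ℝ) (φ := fun _ : Fin n => ℝ) i).hasFDerivAt.comp β
      (hWd β).hasFDerivAt
    exact h
  have hfeq : (fun b => fderiv ℝ (U t) (χ b) (Pi.single i 1)) = fun b => W b i := by
    funext b
    exact hfun b i
  rw [hfeq] at hLHS
  have hCLM := hLHS.unique hRHS
  have happ := congrArg (fun (L : (Fin n → ℝ) →L[ℝ] ℝ) => L v) hCLM
  simp only [ContinuousLinearMap.coe_comp', Function.comp_apply,
    ContinuousLinearMap.add_apply, ContinuousLinearMap.coe_id', id_eq,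
    ContinuousLinearMap.coe_smul', Pi.smul_apply,
    ContinuousLinearMap.apply_apply, ContinuousLinearMap.proj_apply] at happ
  rw [iteratedFDeriv_two_apply, iteratedFDeriv_two_apply]
  simp only [Matrix.cons_val_zero, Matrix.cons_val_one, Matrix.head_cons]
  rw [happ]
  rw [fderiv_gradFn'_apply hΦ β v i, iteratedFDeriv_two_apply]
  simp only [Matrix.cons_val_zero, Matrix.cons_val_one, Matrix.head_cons]

lemma norm_single_le_one {n : ℕ} (j : Fin n) : ‖(Pi.single j 1 : Fin n → ℝ)‖ ≤ 1 := by
  rw [pi_norm_le_iff_of_nonneg zero_le_one]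
  intro k
  rcases eq_or_ne j k with h | h <;> simp [Pi.single_apply, h]

lemma iFD3_apply {E : Type*} [NormedAddCommGroup E] [NormedSpace ℝ E]
    (f : E → ℝ) (x : E) (a b c : E) :
    iteratedFDeriv ℝ 3 f x ![a, b, c]
      = (fderiv ℝ (iteratedFDeriv ℝ 2 f) x a) ![b, c] := by
  have htail : Fin.tail (![a,b,c] : Fin 3 → E) = ![b,c] := by
    funext k; fin_cases k <;> rfl
  rw [iteratedFDeriv_succ_apply_left, htail]
  simp

lemma ident_I2 {n : ℕ} {Φ : (Fin n → ℝ) → ℝ} (hΦ : ContDiff ℝ 3 Φ)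
    {U : ℝ → (Fin n → ℝ) → ℝ} {t : ℝ} (ht : 0 ≤ t)
    (hUt : ContDiff ℝ 3 (U t))
    (hI1 : ∀ (β v : Fin n → ℝ) (i : Fin n),
      iteratedFDeriv ℝ 2 (U t) (β + t • gradFn' Φ β)
          ![v + t • fderiv ℝ (gradFn' Φ) β v, Pi.single i 1]
        = iteratedFDeriv ℝ 2 Φ β ![v, Pi.single i 1])
    (α : Fin n → ℝ) :
    ∀ (w v : Fin n → ℝ) (i : Fin n),
      iteratedFDeriv ℝ 3 (U t) (α + t • gradFn' Φ α)
          ![w + t • fderiv ℝ (gradFn' Φ) α w, v + t • fderiv ℝ (gradFn' Φ) α v, Pi.single i 1]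
        + iteratedFDeriv ℝ 2 (U t) (α + t • gradFn' Φ α)
            ![t • ((fderiv ℝ (fderiv ℝ (gradFn' Φ)) α w) v), Pi.single i 1]
      = iteratedFDeriv ℝ 3 Φ α ![w, v, Pi.single i 1] := by
  intro w v i
  set W := gradFn' Φ with hWdef
  have hW2 : ContDiff ℝ 2 W := gradFn'_contDiff hΦ
  have hWd : Differentiable ℝ W := hW2.differentiable (by norm_num)
  have hW'd : Differentiable ℝ (fderiv ℝ W) :=
    (hW2.fderiv_right (m := 1) (by norm_num)).differentiable (by norm_num)
  set χ : (Fin n → ℝ) → (Fin n → ℝ) := fun b => b + t • W b with hχdef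
  set p := χ α with hpdef
  have hχ : HasFDerivAt χ
      (ContinuousLinearMap.id ℝ (Fin n → ℝ) + t • fderiv ℝ W α) α :=
    (hasFDerivAt_id α).add (((hWd α).hasFDerivAt).const_smul t)
  -- the bounded bilinear evaluation map
  set b : (ContinuousMultilinearMap ℝ (fun _ : Fin 2 => (Fin n → ℝ)) ℝ) × (Fin n → ℝ) → ℝ :=
    fun q => q.1 ![q.2, Pi.single i 1] with hbdef
  have hb : IsBoundedBilinearMap ℝ b := by
    refine ⟨fun f g a => by simp [hbdef], fun c f a => by simp [hbdef],
      fun f a a' => (slot2_0 f (Pi.single i 1)).map_add a a',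
      fun c f a => (slot2_0 f (Pi.single i 1)).map_smul c a,
      ⟨1, one_pos, fun f a => ?_⟩⟩
    have h1 := f.le_opNorm ![a, Pi.single i 1]
    rw [Fin.prod_univ_two] at h1
    simp only [Matrix.cons_val_zero, Matrix.cons_val_one, Matrix.head_cons] at h1
    calc ‖b (f, a)‖ ≤ ‖f‖ * (‖a‖ * ‖(Pi.single i 1 : Fin n → ℝ)‖) := by
          rw [hbdef]; simpa [mul_assoc] using h1
    _ ≤ ‖f‖ * (‖a‖ * 1) := by
        refine mul_le_mul_of_nonneg_left ?_ (norm_nonneg f)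
        exact mul_le_mul_of_nonneg_left (norm_single_le_one i) (norm_nonneg a)
    _ = 1 * ‖f‖ * ‖a‖ := by ring
  -- derivatives of the two components
  have hD2d : Differentiable ℝ (iteratedFDeriv ℝ 2 (U t)) :=
    (hUt.iteratedFDeriv_right (m := 1) (by norm_num)).differentiable (by norm_num)
  have hD2Φd : Differentiable ℝ (iteratedFDeriv ℝ 2 Φ) :=
    (hΦ.iteratedFDeriv_right (m := 1) (by norm_num)).differentiable (by norm_num)
  have h1 : HasFDerivAt (fun β => iteratedFDeriv ℝ 2 (U t) (χ β))
      ((fderiv ℝ (iteratedFDeriv ℝ 2 (U t)) p).comp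
        (ContinuousLinearMap.id ℝ (Fin n → ℝ) + t • fderiv ℝ W α)) α := by
    have h := ((hD2d p).hasFDerivAt).comp α hχ
    exact h
  have h2 : HasFDerivAt (fun β => v + t • fderiv ℝ W β v)
      (t • ((ContinuousLinearMap.apply ℝ (Fin n → ℝ) v).comp
        (fderiv ℝ (fderiv ℝ W) α))) α := by
    have hin : HasFDerivAt (fun β => fderiv ℝ W β v)
        ((ContinuousLinearMap.apply ℝ (Fin n → ℝ) v).comp (fderiv ℝ (fderiv ℝ W) α)) α := by
      have h := (ContinuousLinearMap.apply ℝ (Fin n → ℝ) v).hasFDerivAt.comp α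
        (hW'd α).hasFDerivAt
      exact h
    simpa using (hin.const_smul t).const_add v
  have hP : HasFDerivAt (fun β => (iteratedFDeriv ℝ 2 (U t) (χ β), v + t • fderiv ℝ W β v))
      (((fderiv ℝ (iteratedFDeriv ℝ 2 (U t)) p).comp
          (ContinuousLinearMap.id ℝ (Fin n → ℝ) + t • fderiv ℝ W α)).prod
        (t • ((ContinuousLinearMap.apply ℝ (Fin n → ℝ) v).comp
          (fderiv ℝ (fderiv ℝ W) α)))) α := h1.prodMk h2
  have hLHS : HasFDerivAt (fun β => iteratedFDeriv ℝ 2 (U t) (χ β)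
        ![v + t • fderiv ℝ W β v, Pi.single i 1])
      ((hb.deriv (iteratedFDeriv ℝ 2 (U t) p, v + t • fderiv ℝ W α v)).comp
        ((((fderiv ℝ (iteratedFDeriv ℝ 2 (U t)) p).comp
          (ContinuousLinearMap.id ℝ (Fin n → ℝ) + t • fderiv ℝ W α)).prod
        (t • ((ContinuousLinearMap.apply ℝ (Fin n → ℝ) v).comp
          (fderiv ℝ (fderiv ℝ W) α)))))) α := by
    have h := (hb.hasFDerivAt (iteratedFDeriv ℝ 2 (U t) p, v + t • fderiv ℝ W α v)).comp α hP
    exact h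
  have hRHS : HasFDerivAt (fun β => iteratedFDeriv ℝ 2 Φ β ![v, Pi.single i 1])
      ((ContinuousMultilinearMap.apply ℝ (fun _ : Fin 2 => (Fin n → ℝ)) ℝ
          ![v, Pi.single i 1]).comp (fderiv ℝ (iteratedFDeriv ℝ 2 Φ) α)) α := by
    have h := (ContinuousMultilinearMap.apply ℝ (fun _ : Fin 2 => (Fin n → ℝ)) ℝ
      ![v, Pi.single i 1]).hasFDerivAt.comp α (hD2Φd α).hasFDerivAt
    exact h
  have hfeq : (fun β => iteratedFDeriv ℝ 2 (U t) (χ β)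
      ![v + t • fderiv ℝ W β v, Pi.single i 1])
      = fun β => iteratedFDeriv ℝ 2 Φ β ![v, Pi.single i 1] := by
    funext β
    exact hI1 β v i
  rw [hfeq] at hLHS
  have hCLM := hLHS.unique hRHS
  have happ := congrArg (fun (L : (Fin n → ℝ) →L[ℝ] ℝ) => L w) hCLM
  simp only [ContinuousLinearMap.coe_comp', Function.comp_apply,
    ContinuousLinearMap.prod_apply, ContinuousLinearMap.add_apply,
    ContinuousLinearMap.coe_id', id_eq, ContinuousLinearMap.coe_smul', Pi.smul_apply,
    ContinuousLinearMap.apply_apply, ContinuousMultilinearMap.apply_apply,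
    IsBoundedBilinearMap.deriv_apply] at happ
  -- now happ should read:
  --  b (fderiv (iFD2 (U t)) p (w + t • fderiv W α w), v + t • fderiv W α v)
  --    + b (iFD2 (U t) p, t • (fderiv (fderiv W) α w) v)
  --  = (fderiv (iFD2 Φ) α w) ![v, e i]
  rw [iFD3_apply, iFD3_apply]
  rw [add_comm] at happ
  exact happ

lemma t_mul_inv_le {δ t : ℝ} (hδ : 0 < δ) (ht : 0 ≤ t) : t * (1 + t * δ)⁻¹ ≤ δ⁻¹ := by
  have hpos : (0:ℝ) < 1 + t * δ := by nlinarith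
  rw [← div_eq_mul_inv, div_le_iff₀ hpos]
  have h1 : δ⁻¹ * δ = 1 := inv_mul_cancel₀ hδ.ne'
  have h2 : 0 ≤ δ⁻¹ := by positivity
  nlinarith

lemma bound2 {n : ℕ} {Φ : (Fin n → ℝ) → ℝ} (hΦ : ContDiff ℝ 3 Φ)
    {U : ℝ → (Fin n → ℝ) → ℝ} {t δ : ℝ} (hδ : 0 < δ) (ht : 0 ≤ t)
    (hstrict : ∀ x : Fin n → ℝ, ∀ v : Fin n → ℝ,
      δ * ∑ i, v i ^ 2 ≤ ∑ i, ∑ j, hessMat' Φ x i j * v i * v j)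
    (α : Fin n → ℝ)
    (hI1 : ∀ (v : Fin n → ℝ) (i : Fin n),
      iteratedFDeriv ℝ 2 (U t) (α + t • gradFn' Φ α)
          ![v + t • fderiv ℝ (gradFn' Φ) α v, Pi.single i 1]
        = iteratedFDeriv ℝ 2 Φ α ![v, Pi.single i 1]) :
    ‖iteratedFDeriv ℝ 2 (U t) (α + t • gradFn' Φ α)‖
      ≤ ‖iteratedFDeriv ℝ 2 Φ α‖ * Real.sqrt n * (1 + t * δ)⁻¹ := by
  have hpos : (0:ℝ) < 1 + t * δ := by nlinarith
  refine ContinuousMultilinearMap.opNorm_le_bound ?_ fun m => ?_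
  · have := norm_nonneg (iteratedFDeriv ℝ 2 Φ α)
    positivity
  obtain ⟨v, hv, hvb⟩ := Ainv_bound hΦ hδ hstrict ht α (m 0)
  have hm : m = ![m 0, m 1] := fin2_eta m
  have hval : iteratedFDeriv ℝ 2 (U t) (α + t • gradFn' Φ α) m
      = iteratedFDeriv ℝ 2 Φ α ![v, m 1] := by
    conv_lhs => rw [hm]
    rw [cml2_expand_snd]
    rw [cml2_expand_snd (iteratedFDeriv ℝ 2 Φ α)]
    refine Finset.sum_congr rfl fun i _ => ?_
    rw [← hv, hI1 v i]
  rw [hval]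
  have h1 := (iteratedFDeriv ℝ 2 Φ α).le_opNorm ![v, m 1]
  rw [Fin.prod_univ_two] at h1
  simp only [Matrix.cons_val_zero, Matrix.cons_val_one, Matrix.head_cons] at h1
  calc ‖iteratedFDeriv ℝ 2 Φ α ![v, m 1]‖
      ≤ ‖iteratedFDeriv ℝ 2 Φ α‖ * (‖v‖ * ‖m 1‖) := h1
  _ ≤ ‖iteratedFDeriv ℝ 2 Φ α‖ * (((1 + t * δ)⁻¹ * Real.sqrt n * ‖m 0‖) * ‖m 1‖) := by
      refine mul_le_mul_of_nonneg_left ?_ (norm_nonneg _)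
      exact mul_le_mul_of_nonneg_right hvb (norm_nonneg _)
  _ = ‖iteratedFDeriv ℝ 2 Φ α‖ * Real.sqrt n * (1 + t * δ)⁻¹ * (‖m 0‖ * ‖m 1‖) := by ring
  _ = ‖iteratedFDeriv ℝ 2 Φ α‖ * Real.sqrt n * (1 + t * δ)⁻¹ * ∏ i, ‖m i‖ := by
      rw [Fin.prod_univ_two]

lemma bound3 {n : ℕ} {Φ : (Fin n → ℝ) → ℝ} (hΦ : ContDiff ℝ 3 Φ)
    {U : ℝ → (Fin n → ℝ) → ℝ} {t δ : ℝ} (hδ : 0 < δ) (ht : 0 ≤ t)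
    (hstrict : ∀ x : Fin n → ℝ, ∀ v : Fin n → ℝ,
      δ * ∑ i, v i ^ 2 ≤ ∑ i, ∑ j, hessMat' Φ x i j * v i * v j)
    (α : Fin n → ℝ)
    (hI2 : ∀ (w v : Fin n → ℝ) (i : Fin n),
      iteratedFDeriv ℝ 3 (U t) (α + t • gradFn' Φ α)
          ![w + t • fderiv ℝ (gradFn' Φ) α w, v + t • fderiv ℝ (gradFn' Φ) α v, Pi.single i 1]
        + iteratedFDeriv ℝ 2 (U t) (α + t • gradFn' Φ α)
            ![t • ((fderiv ℝ (fderiv ℝ (gradFn' Φ)) α w) v), Pi.single i 1]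
      = iteratedFDeriv ℝ 3 Φ α ![w, v, Pi.single i 1])
    (hB2 : ‖iteratedFDeriv ℝ 2 (U t) (α + t • gradFn' Φ α)‖
      ≤ ‖iteratedFDeriv ℝ 2 Φ α‖ * Real.sqrt n * (1 + t * δ)⁻¹) :
    ‖iteratedFDeriv ℝ 3 (U t) (α + t • gradFn' Φ α)‖
      ≤ (n * n * (‖iteratedFDeriv ℝ 3 Φ α‖
          + Real.sqrt n * ‖iteratedFDeriv ℝ 2 Φ α‖
            * ‖fderiv ℝ (fderiv ℝ (gradFn' Φ)) α‖ * δ⁻¹))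
        * ((1 + t * δ)⁻¹) ^ 2 := by
  have hpos : (0:ℝ) < 1 + t * δ := by nlinarith
  set G3 := ‖iteratedFDeriv ℝ 3 Φ α‖ with hG3
  set c2 := ‖iteratedFDeriv ℝ 2 Φ α‖ with hc2
  set c3 := ‖fderiv ℝ (fderiv ℝ (gradFn' Φ)) α‖ with hc3
  have hG3n : 0 ≤ G3 := norm_nonneg _
  have hc2n : 0 ≤ c2 := norm_nonneg _
  have hc3n : 0 ≤ c3 := norm_nonneg (fderiv ℝ (fderiv ℝ (gradFn' Φ)) α)
  have hsq : (0:ℝ) ≤ Real.sqrt n := Real.sqrt_nonneg _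
  have hκ : (0:ℝ) ≤ (1 + t * δ)⁻¹ := le_of_lt (inv_pos.mpr hpos)
  have hiv : (0:ℝ) ≤ δ⁻¹ := le_of_lt (inv_pos.mpr hδ)
  set K := Real.sqrt n * c2 * c3 * δ⁻¹ with hK
  have hKn : 0 ≤ K := by
    rw [hK]; exact mul_nonneg (mul_nonneg (mul_nonneg hsq hc2n) hc3n) hiv
  refine ContinuousMultilinearMap.opNorm_le_bound ?_ fun m => ?_
  · have hn0 : (0:ℝ) ≤ (n:ℝ) := Nat.cast_nonneg n
    have := sq_nonneg ((1 + t * δ)⁻¹)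
    exact mul_nonneg (mul_nonneg (mul_nonneg hn0 hn0) (by linarith)) this
  obtain ⟨w, hw, hwb⟩ := Ainv_bound hΦ hδ hstrict ht α (m 0)
  obtain ⟨v, hv, hvb⟩ := Ainv_bound hΦ hδ hstrict ht α (m 1)
  have hwn : (0:ℝ) ≤ ‖w‖ := norm_nonneg _
  have hvn : (0:ℝ) ≤ ‖v‖ := norm_nonneg _
  have hm : m = ![m 0, m 1, m 2] := fin3_eta m
  have hbase : ∀ i : Fin n,
      ‖iteratedFDeriv ℝ 3 (U t) (α + t • gradFn' Φ α) ![m 0, m 1, Pi.single i 1]‖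
        ≤ (G3 + K) * (‖w‖ * ‖v‖) := by
    intro i
    have hkey := hI2 w v i
    rw [hw, hv] at hkey
    have heq : iteratedFDeriv ℝ 3 (U t) (α + t • gradFn' Φ α) ![m 0, m 1, Pi.single i 1]
        = iteratedFDeriv ℝ 3 Φ α ![w, v, Pi.single i 1]
          - iteratedFDeriv ℝ 2 (U t) (α + t • gradFn' Φ α)
              ![t • ((fderiv ℝ (fderiv ℝ (gradFn' Φ)) α w) v), Pi.single i 1] := by
      linarith
    rw [heq]
    have hsing := norm_single_le_one i
    -- first term
    have hT1 : ‖iteratedFDeriv ℝ 3 Φ α ![w, v, Pi.single i 1]‖ ≤ G3 * (‖w‖ * ‖v‖) := by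
      have h1 := (iteratedFDeriv ℝ 3 Φ α).le_opNorm ![w, v, Pi.single i 1]
      rw [Fin.prod_univ_three] at h1
      simp only [Matrix.cons_val_zero, Matrix.cons_val_one, Matrix.head_cons,
        Matrix.cons_val_two, Matrix.tail_cons] at h1
      refine h1.trans ?_
      refine mul_le_mul_of_nonneg_left ?_ hG3n
      calc ‖w‖ * ‖v‖ * ‖(Pi.single i 1 : Fin n → ℝ)‖
          ≤ ‖w‖ * ‖v‖ * 1 := mul_le_mul_of_nonneg_left hsing (mul_nonneg hwn hvn)
      _ = ‖w‖ * ‖v‖ := mul_one _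
    -- second term
    have hT2 : ‖iteratedFDeriv ℝ 2 (U t) (α + t • gradFn' Φ α)
          ![t • ((fderiv ℝ (fderiv ℝ (gradFn' Φ)) α w) v), Pi.single i 1]‖
        ≤ K * (‖w‖ * ‖v‖) := by
      set B := ‖iteratedFDeriv ℝ 2 (U t) (α + t • gradFn' Φ α)‖ with hB
      set Q := (fderiv ℝ (fderiv ℝ (gradFn' Φ)) α w) v with hQdef
      have hBn : 0 ≤ B := norm_nonneg _
      have hQn : (0:ℝ) ≤ ‖Q‖ := norm_nonneg _
      have h1 := (iteratedFDeriv ℝ 2 (U t) (α + t • gradFn' Φ α)).le_opNorm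
        ![t • Q, Pi.single i 1]
      rw [Fin.prod_univ_two] at h1
      simp only [Matrix.cons_val_zero, Matrix.cons_val_one, Matrix.head_cons] at h1
      have hsm : ‖t • Q‖ = t * ‖Q‖ := by
        rw [norm_smul, Real.norm_eq_abs, abs_of_nonneg ht]
      have hQb : ‖Q‖ ≤ c3 * ‖w‖ * ‖v‖ := by
        calc ‖Q‖ ≤ ‖fderiv ℝ (fderiv ℝ (gradFn' Φ)) α w‖ * ‖v‖ :=
              ContinuousLinearMap.le_opNorm _ _
        _ ≤ (c3 * ‖w‖) * ‖v‖ :=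
            mul_le_mul_of_nonneg_right (ContinuousLinearMap.le_opNorm _ _) hvn
        _ = c3 * ‖w‖ * ‖v‖ := by ring
      have htk : t * (1 + t * δ)⁻¹ ≤ δ⁻¹ := t_mul_inv_le hδ ht
      calc ‖iteratedFDeriv ℝ 2 (U t) (α + t • gradFn' Φ α) ![t • Q, Pi.single i 1]‖
          ≤ B * (‖t • Q‖ * ‖(Pi.single i 1 : Fin n → ℝ)‖) := h1
      _ ≤ B * ‖t • Q‖ := by
          refine mul_le_mul_of_nonneg_left ?_ hBn
          calc ‖t • Q‖ * ‖(Pi.single i 1 : Fin n → ℝ)‖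
              ≤ ‖t • Q‖ * 1 := mul_le_mul_of_nonneg_left hsing (norm_nonneg _)
          _ = ‖t • Q‖ := mul_one _
      _ = B * (t * ‖Q‖) := by rw [hsm]
      _ ≤ (c2 * Real.sqrt n * (1 + t * δ)⁻¹) * (t * ‖Q‖) :=
          mul_le_mul_of_nonneg_right hB2 (mul_nonneg ht hQn)
      _ = (c2 * Real.sqrt n) * (t * (1 + t * δ)⁻¹) * ‖Q‖ := by ring
      _ ≤ (c2 * Real.sqrt n) * δ⁻¹ * ‖Q‖ := by
          refine mul_le_mul_of_nonneg_right ?_ hQn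
          exact mul_le_mul_of_nonneg_left htk (mul_nonneg hc2n hsq)
      _ ≤ (c2 * Real.sqrt n) * δ⁻¹ * (c3 * ‖w‖ * ‖v‖) := by
          refine mul_le_mul_of_nonneg_left hQb ?_
          exact mul_nonneg (mul_nonneg hc2n hsq) hiv
      _ = K * (‖w‖ * ‖v‖) := by rw [hK]; ring
    calc ‖iteratedFDeriv ℝ 3 Φ α ![w, v, Pi.single i 1]
          - iteratedFDeriv ℝ 2 (U t) (α + t • gradFn' Φ α)
              ![t • ((fderiv ℝ (fderiv ℝ (gradFn' Φ)) α w) v), Pi.single i 1]‖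
        ≤ ‖iteratedFDeriv ℝ 3 Φ α ![w, v, Pi.single i 1]‖
          + ‖iteratedFDeriv ℝ 2 (U t) (α + t • gradFn' Φ α)
              ![t • ((fderiv ℝ (fderiv ℝ (gradFn' Φ)) α w) v), Pi.single i 1]‖ :=
          norm_sub_le _ _
    _ ≤ G3 * (‖w‖ * ‖v‖) + K * (‖w‖ * ‖v‖) := add_le_add hT1 hT2
    _ = (G3 + K) * (‖w‖ * ‖v‖) := by ring
  -- expand third slot and sum
  have hval : iteratedFDeriv ℝ 3 (U t) (α + t • gradFn' Φ α) m
      = ∑ i, (m 2) i • iteratedFDeriv ℝ 3 (U t) (α + t • gradFn' Φ α)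
          ![m 0, m 1, Pi.single i 1] := by
    conv_lhs => rw [hm]
    exact cml3_expand_thd _ _ _ _
  rw [hval]
  have hsumb : ‖∑ i, (m 2) i • iteratedFDeriv ℝ 3 (U t) (α + t • gradFn' Φ α)
        ![m 0, m 1, Pi.single i 1]‖
      ≤ ∑ _i : Fin n, ‖m 2‖ * ((G3 + K) * (‖w‖ * ‖v‖)) := by
    refine le_trans (norm_sum_le _ _) (Finset.sum_le_sum fun i _ => ?_)
    rw [norm_smul, Real.norm_eq_abs]
    have h1 : |(m 2) i| ≤ ‖m 2‖ := by
      have := norm_le_pi_norm (m 2) i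
      rwa [Real.norm_eq_abs] at this
    exact mul_le_mul h1 (hbase i) (norm_nonneg _) (norm_nonneg _)
  refine le_trans hsumb ?_
  rw [Finset.sum_const, Finset.card_univ, Fintype.card_fin, nsmul_eq_mul]
  have hsqn : (Real.sqrt n) ^ 2 = (n:ℝ) := Real.sq_sqrt (Nat.cast_nonneg n)
  have hwv : ‖w‖ * ‖v‖ ≤ (((1 + t * δ)⁻¹) ^ 2 * (n:ℝ)) * (‖m 0‖ * ‖m 1‖) := by
    have hstep := mul_le_mul hwb hvb hvn
      (mul_nonneg (mul_nonneg hκ hsq) (norm_nonneg (m 0)))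
    calc ‖w‖ * ‖v‖ ≤ ((1 + t * δ)⁻¹ * Real.sqrt n * ‖m 0‖)
        * ((1 + t * δ)⁻¹ * Real.sqrt n * ‖m 1‖) := hstep
    _ = (((1 + t * δ)⁻¹) ^ 2 * ((Real.sqrt n) ^ 2)) * (‖m 0‖ * ‖m 1‖) := by ring
    _ = (((1 + t * δ)⁻¹) ^ 2 * (n:ℝ)) * (‖m 0‖ * ‖m 1‖) := by rw [hsqn]
  have hGKn : (0:ℝ) ≤ G3 + K := by linarith
  have hm2 : (0:ℝ) ≤ ‖m 2‖ := norm_nonneg _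
  have hprod : ∏ i, ‖m i‖ = ‖m 0‖ * ‖m 1‖ * ‖m 2‖ := Fin.prod_univ_three _
  rw [hprod]
  calc (n:ℝ) * (‖m 2‖ * ((G3 + K) * (‖w‖ * ‖v‖)))
      = ((n:ℝ) * (‖m 2‖ * (G3 + K))) * (‖w‖ * ‖v‖) := by ring
  _ ≤ ((n:ℝ) * (‖m 2‖ * (G3 + K)))
      * ((((1 + t * δ)⁻¹) ^ 2 * (n:ℝ)) * (‖m 0‖ * ‖m 1‖)) := by
      refine mul_le_mul_of_nonneg_left hwv ?_
      exact mul_nonneg (Nat.cast_nonneg n) (mul_nonneg hm2 hGKn)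
  _ = (n * n * (G3 + K)) * ((1 + t * δ)⁻¹) ^ 2 * (‖m 0‖ * ‖m 1‖ * ‖m 2‖) := by ring

/-- under uniform convexity `Hess Φ ≥ δ·I`, along each characteristic curve
`x(t,α) = α + t∇Φ(α)` the second and third spatial derivatives of the potential `U` decay
like `(1+t)⁻¹` and `(1+t)⁻²` respectively. -/
theorem burgers_potential_decay_along_characteristics
    (n : ℕ) (Φ : (Fin n → ℝ) → ℝ) (hΦ : ContDiff ℝ 3 Φ)
    (hconvex : ∀ x : Fin n → ℝ, (hessMat Φ x).PosSemidef)
    (u : ℝ → (Fin n → ℝ) → (Fin n → ℝ))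
    (hu : IsGlobalSolBurgers n (gradFn Φ) 2 u)
    (U : ℝ → (Fin n → ℝ) → ℝ)
    (hU : ContDiffOn ℝ 3 (fun p : ℝ × (Fin n → ℝ) => U p.1 p.2) (Set.Ici 0 ×ˢ Set.univ))
    (hpot : ∀ t ∈ Set.Ici (0 : ℝ), ∀ x : Fin n → ℝ, ∀ i : Fin n,
      u t x i = fderiv ℝ (U t) x (Pi.single i 1))
    (δ : ℝ) (hδ : 0 < δ)
    (hstrict : ∀ x : Fin n → ℝ, ∀ v : Fin n → ℝ,
      δ * ∑ i, v i ^ 2 ≤ ∑ i, ∑ j, hessMat Φ x i j * v i * v j) :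
    ∀ α : Fin n → ℝ, ∃ C₁ > (0:ℝ), ∃ C₂ > (0:ℝ),
      ∀ t ∈ Set.Ici (0 : ℝ),
        ‖iteratedFDeriv ℝ 2 (U t) (α + t • gradFn Φ α)‖ ≤ C₁ * (1 + t)⁻¹ ∧
        ‖iteratedFDeriv ℝ 3 (U t) (α + t • gradFn Φ α)‖ ≤ C₂ * ((1 + t) ^ 2)⁻¹ := by
  intro α
  have hstrict' : ∀ x : Fin n → ℝ, ∀ v : Fin n → ℝ,
      δ * ∑ i, v i ^ 2 ≤ ∑ i, ∑ j, hessMat' Φ x i j * v i * v j := hstrict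
  have hchar : ∀ t ∈ Set.Ici (0:ℝ), ∀ β, u t (β + t • gradFn' Φ β) = gradFn' Φ β :=
    char_const (show IsGlobalSolBurgers' n (gradFn' Φ) 2 u from hu)
  set m0 := max 1 δ⁻¹ with hm0
  have hm0pos : (0:ℝ) < m0 := lt_of_lt_of_le one_pos (le_max_left 1 δ⁻¹)
  set c2 := ‖iteratedFDeriv ℝ 2 Φ α‖ with hc2
  set G3 := ‖iteratedFDeriv ℝ 3 Φ α‖ with hG3
  set c3 := ‖fderiv ℝ (fderiv ℝ (gradFn' Φ)) α‖ with hc3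
  have hc2n : 0 ≤ c2 := norm_nonneg _
  have hG3n : 0 ≤ G3 := norm_nonneg _
  have hc3n : 0 ≤ c3 := norm_nonneg (fderiv ℝ (fderiv ℝ (gradFn' Φ)) α)
  have hsq : (0:ℝ) ≤ Real.sqrt n := Real.sqrt_nonneg _
  have hiv : (0:ℝ) ≤ δ⁻¹ := le_of_lt (inv_pos.mpr hδ)
  set Ccore := (n:ℝ) * n * (G3 + Real.sqrt n * c2 * c3 * δ⁻¹) with hCcore
  have hCcoren : 0 ≤ Ccore := by
    have : (0:ℝ) ≤ G3 + Real.sqrt n * c2 * c3 * δ⁻¹ := by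
      have := mul_nonneg (mul_nonneg (mul_nonneg hsq hc2n) hc3n) hiv
      linarith
    exact mul_nonneg (mul_nonneg (Nat.cast_nonneg n) (Nat.cast_nonneg n)) this
  have hC1n : 0 ≤ c2 * Real.sqrt n * m0 := mul_nonneg (mul_nonneg hc2n hsq) hm0pos.le
  refine ⟨c2 * Real.sqrt n * m0 + 1, by linarith, Ccore * m0 ^ 2 + 1, ?_, ?_⟩
  · have := mul_nonneg hCcoren (sq_nonneg m0)
    linarith
  intro t ht
  have ht' : (0:ℝ) ≤ t := ht
  have hpos : (0:ℝ) < 1 + t * δ := by nlinarith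
  have hκ : (0:ℝ) ≤ (1 + t * δ)⁻¹ := le_of_lt (inv_pos.mpr hpos)
  have hUt : ContDiff ℝ 3 (U t) := slice_contDiff hU ht'
  have hfun : ∀ (β : Fin n → ℝ) (i : Fin n),
      fderiv ℝ (U t) (β + t • gradFn' Φ β) (Pi.single i 1) = gradFn' Φ β i := by
    intro β i
    rw [← hpot t ht (β + t • gradFn' Φ β) i]
    exact congrFun (hchar t ht β) i
  have hI1 := ident_I1 hΦ ht' hUt hfun
  have hI2 := ident_I2 hΦ ht' hUt hI1 α
  have hB2 := bound2 hΦ hδ ht' hstrict' α (fun v i => hI1 α v i)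
  have hB3 := bound3 hΦ hδ ht' hstrict' α hI2 hB2
  have hdf := decay_factor hδ ht'
  have h1t : (0:ℝ) < 1 + t := by linarith
  have hinv : (0:ℝ) ≤ (1 + t)⁻¹ := le_of_lt (inv_pos.mpr h1t)
  constructor
  · calc ‖iteratedFDeriv ℝ 2 (U t) (α + t • gradFn Φ α)‖
        ≤ c2 * Real.sqrt n * (1 + t * δ)⁻¹ := hB2
    _ ≤ c2 * Real.sqrt n * (m0 * (1 + t)⁻¹) :=
        mul_le_mul_of_nonneg_left hdf (mul_nonneg hc2n hsq)
    _ = (c2 * Real.sqrt n * m0) * (1 + t)⁻¹ := by ring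
    _ ≤ (c2 * Real.sqrt n * m0 + 1) * (1 + t)⁻¹ := by nlinarith
  · calc ‖iteratedFDeriv ℝ 3 (U t) (α + t • gradFn Φ α)‖
        ≤ Ccore * ((1 + t * δ)⁻¹) ^ 2 := hB3
    _ ≤ Ccore * (m0 * (1 + t)⁻¹) ^ 2 := by
        refine mul_le_mul_of_nonneg_left ?_ hCcoren
        exact pow_le_pow_left₀ hκ hdf 2
    _ = (Ccore * m0 ^ 2) * ((1 + t) ^ 2)⁻¹ := by
        rw [mul_pow, ← inv_pow]; ring
    _ ≤ (Ccore * m0 ^ 2 + 1) * ((1 + t) ^ 2)⁻¹ := by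
        have : (0:ℝ) ≤ ((1 + t) ^ 2)⁻¹ := by positivity
        nlinarith
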